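/- Let φ, u : EuclideanSpace ℝ (Fin 3) → ℝ be twice continuously differentiable (ContDiff ℝ 2). Define the vector field v : EuclideanSpace ℝ (Fin 3) → EuclideanSpace ℝ (Fin 3) by v y = grad u y + u y • grad φ y (i.e., v = J⁰u). Then for every x, curl v x + (grad φ x) × (v x) = 0; that is, the composition of the shifted flux operators satisfies J¹ ∘ J⁰ = 0 and the shifted operators preserve the de Rham complex property curl ∘ grad = 0. -/

import Mathlib

/-- Fréchet directional derivative of a scalar function along the `i`-th
standard basis vector of `EuclideanSpace ℝ (Fin 3)`. -/
noncomputable def pd (i : Fin 3) (f : EuclideanSpace ℝ (Fin 3) → ℝ)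
    (x : EuclideanSpace ℝ (Fin 3)) : ℝ :=
  fderiv ℝ f x (EuclideanSpace.single i 1)

/-- Componentwise curl of a vector field on `EuclideanSpace ℝ (Fin 3)`. -/
noncomputable def curl3 (F : EuclideanSpace ℝ (Fin 3) → EuclideanSpace ℝ (Fin 3))
    (x : EuclideanSpace ℝ (Fin 3)) : EuclideanSpace ℝ (Fin 3) :=
  WithLp.toLp 2 ![pd 1 (fun y => F y 2) x - pd 2 (fun y => F y 1) x,
    pd 2 (fun y => F y 0) x - pd 0 (fun y => F y 2) x,
    pd 0 (fun y => F y 1) x - pd 1 (fun y => F y 0) x]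

/-- Three-dimensional cross product on `EuclideanSpace ℝ (Fin 3)`. -/
noncomputable def cross3 (a b : EuclideanSpace ℝ (Fin 3)) : EuclideanSpace ℝ (Fin 3) :=
  WithLp.toLp 2 (crossProduct a b)

lemma gradient_apply_pd (f : EuclideanSpace ℝ (Fin 3) → ℝ) (y : EuclideanSpace ℝ (Fin 3))
    (i : Fin 3) : gradient f y i = pd i f y := by
  have h : (inner ℝ (gradient f y) (EuclideanSpace.single i (1:ℝ)) : ℝ) = pd i f y := by
    rw [gradient, InnerProductSpace.toDual_symm_apply]; rfl
  rw [EuclideanSpace.inner_single_right] at h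
  simpa using h

lemma pd_differentiable (f : EuclideanSpace ℝ (Fin 3) → ℝ) (hf : ContDiff ℝ 2 f) (j : Fin 3) :
    Differentiable ℝ (pd j f) := by
  have h1 : ContDiff ℝ 1 (fderiv ℝ f) := hf.fderiv_right (by norm_num)
  have : Differentiable ℝ (fderiv ℝ f) := h1.differentiable one_ne_zero
  exact fun x => (ContinuousLinearMap.apply ℝ ℝ
    (EuclideanSpace.single j (1:ℝ))).differentiable.comp (this) x

lemma fderiv_pd (f : EuclideanSpace ℝ (Fin 3) → ℝ) (hf : ContDiff ℝ 2 f)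
    (x : EuclideanSpace ℝ (Fin 3)) (i j : Fin 3) :
    pd i (pd j f) x = fderiv ℝ (fderiv ℝ f) x (EuclideanSpace.single i 1)
      (EuclideanSpace.single j 1) := by
  have hdf : Differentiable ℝ (fderiv ℝ f) :=
    (hf.fderiv_right (m := 1) (by norm_num)).differentiable one_ne_zero
  have h := fderiv_clm_apply (c := fderiv ℝ f)
    (u := fun _ => EuclideanSpace.single j (1:ℝ)) (hdf x) (differentiableAt_const _)
  rw [pd, show (pd j f) = (fun y => fderiv ℝ f y (EuclideanSpace.single j 1)) from rfl, h]
  simp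

lemma pd_symm (f : EuclideanSpace ℝ (Fin 3) → ℝ) (hf : ContDiff ℝ 2 f)
    (x : EuclideanSpace ℝ (Fin 3)) (i j : Fin 3) :
    pd i (pd j f) x = pd j (pd i f) x := by
  rw [fderiv_pd f hf x i j, fderiv_pd f hf x j i]
  exact (hf.contDiffAt.isSymmSndFDerivAt (by norm_num)) _ _

/-- The composition of the shifted flux operators `J¹ ∘ J⁰` vanishes:
the shifted operators preserve the de Rham complex property `curl ∘ grad = 0`. -/
theorem shifted_flux_curl_grad_eq_zero
    (φ u : EuclideanSpace ℝ (Fin 3) → ℝ)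
    (hφ : ContDiff ℝ 2 φ) (hu : ContDiff ℝ 2 u)
    (v : EuclideanSpace ℝ (Fin 3) → EuclideanSpace ℝ (Fin 3))
    (hv : ∀ y, v y = gradient u y + u y • gradient φ y)
    (x : EuclideanSpace ℝ (Fin 3)) :
    curl3 v x + cross3 (gradient φ x) (v x) = 0 := by
  have hvj : ∀ j y, v y j = pd j u y + u y * pd j φ y := by
    intro j y
    rw [hv y]
    simp [gradient_apply_pd]
  -- pd of a component of v
  have hdu : Differentiable ℝ u := hu.differentiable (by norm_num)
  have key : ∀ i j, pd i (fun y => v y j) x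
      = pd i (pd j u) x + (pd i u x * pd j φ x + u x * pd i (pd j φ) x) := by
    intro i j
    have h1 : (fun y => v y j) = fun y => pd j u y + u y * pd j φ y := by
      funext y; exact hvj j y
    rw [pd, h1]
    rw [fderiv_fun_add (pd_differentiable u hu j x)
      ((hdu x).fun_mul (pd_differentiable φ hφ j x))]
    rw [fderiv_fun_mul (hdu x) (pd_differentiable φ hφ j x)]
    simp [pd]
    ring
  have hsu := pd_symm u hu x
  have hsφ := pd_symm φ hφ x
  ext i
  have hg := gradient_apply_pd φ x
  fin_cases i
  · show pd 1 (fun y => v y 2) x - pd 2 (fun y => v y 1) x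
        + (gradient φ x 1 * v x 2 - gradient φ x 2 * v x 1) = 0
    rw [key, key, hvj, hvj, hg, hg, hsu 1 2, hsφ 1 2]; ring
  · show pd 2 (fun y => v y 0) x - pd 0 (fun y => v y 2) x
        + (gradient φ x 2 * v x 0 - gradient φ x 0 * v x 2) = 0
    rw [key, key, hvj, hvj, hg, hg, hsu 2 0, hsφ 2 0]; ring
  · show pd 0 (fun y => v y 1) x - pd 1 (fun y => v y 0) x
        + (gradient φ x 0 * v x 1 - gradient φ x 1 * v x 0) = 0
    rw [key, key, hvj, hvj, hg, hg, hsu 0 1, hsφ 0 1]; ring
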